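/- Let U : (0, ∞) → ℝ be the entropy U(x) = −√x. Then for every x > 0 the derivative of U at x is −1/(2√x), and for all a, b > 0 with a ≠ b, the Tadmor entropy-conservative flux ((U'(b)·b − U(b)) − (U'(a)·a − U(a))) / (U'(b) − U'(a)) equals the geometric mean √(a·b). -/

import Mathlib

/-- For the entropy `U x = -√x`, the derivative at every `x > 0`
is `-1/(2√x)`, and Tadmor's entropy-conservative flux
`((U'(b)b - U(b)) - (U'(a)a - U(a))) / (U'(b) - U'(a))` equals the geometric mean
`√(a b)` for all positive `a ≠ b`. -/
theorem stmt_8 (U : ℝ → ℝ) (hU : ∀ x : ℝ, U x = -Real.sqrt x) :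
    (∀ x : ℝ, 0 < x → HasDerivAt U (-1 / (2 * Real.sqrt x)) x) ∧
    ∀ a b : ℝ, 0 < a → 0 < b → a ≠ b →
      ((deriv U b * b - U b) - (deriv U a * a - U a)) / (deriv U b - deriv U a)
        = Real.sqrt (a * b) := by
  have hUeq : U = fun x => -Real.sqrt x := funext hU
  have hderiv : ∀ x : ℝ, 0 < x → HasDerivAt U (-1 / (2 * Real.sqrt x)) x := by
    intro x hx
    have h := (Real.hasDerivAt_sqrt (ne_of_gt hx)).neg
    rw [hUeq]
    exact h.congr_deriv (by ring)
  refine ⟨hderiv, ?_⟩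
  intro a b ha hb hab
  have hda : deriv U a = -1 / (2 * Real.sqrt a) := (hderiv a ha).deriv
  have hdb : deriv U b = -1 / (2 * Real.sqrt b) := (hderiv b hb).deriv
  set sa := Real.sqrt a with hsa
  set sb := Real.sqrt b with hsb
  have hsa0 : 0 < sa := Real.sqrt_pos.mpr ha
  have hsb0 : 0 < sb := Real.sqrt_pos.mpr hb
  have hane : sa ≠ sb := fun h => hab (by
    have := congrArg (fun t => t ^ 2) h
    simpa [hsa, hsb, Real.sq_sqrt ha.le, Real.sq_sqrt hb.le] using this)
  have ha2 : a = sa ^ 2 := (Real.sq_sqrt ha.le).symm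
  have hb2 : b = sb ^ 2 := (Real.sq_sqrt hb.le).symm
  have hmul : Real.sqrt (a * b) = sa * sb := Real.sqrt_mul ha.le b
  rw [hda, hdb, hU a, hU b, hmul]
  have hdenom : -1 / (2 * sb) - -1 / (2 * sa) ≠ 0 := by
    field_simp
    intro h
    exact hane (by rcases div_eq_zero_iff.mp h with h | h <;> nlinarith [mul_pos hsa0 hsb0])
  rw [div_eq_iff hdenom, ha2, hb2]
  field_simp
  rw [Real.sqrt_sq hsa0.le, Real.sqrt_sq hsb0.le]
  ring
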